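/- Let H be a 3-regular graph on 2n vertices and R(H) obtained by subdividing each edge with 2t intermediate vertices. Then R(H) is balanced: every induced subgraph of R(H) has average degree at most 2 + 1/(3t+1). -/

import Mathlib

open scoped Classical
/-- The graph obtained from `H` by replacing every edge `(u,v)` by a path with
`2*t` intermediate vertices. -/
def Subdiv {V : Type*} (H : SimpleGraph V) (t : ℕ) :
    SimpleGraph (V ⊕ (H.Dart × Fin t)) :=
  SimpleGraph.fromRel (fun a b =>
    match a, b with
    | Sum.inl u, Sum.inr (d, i) => u = d.fst ∧ i.val = 0
    | Sum.inr (d, i), Sum.inr (e, j) =>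
        (d = e ∧ j.val = i.val + 1) ∨ (e = d.symm ∧ i.val = t - 1 ∧ j.val = t - 1)
    | _, _ => False)

namespace SubdivAux

variable {V : Type*} (H : SimpleGraph V) (t : ℕ)

/-- The `j`-th vertex (0 ≤ j ≤ 2t+1) on the subdivision path associated to dart `d`. -/
def pp (d : H.Dart) (j : ℕ) : V ⊕ (H.Dart × Fin t) :=
  if _h0 : j = 0 then Sum.inl d.fst
  else if h : j ≤ t then Sum.inr (d, ⟨j - 1, by omega⟩)
  else if h2 : j ≤ 2 * t then Sum.inr (d.symm, ⟨2 * t - j, by omega⟩)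
  else Sum.inl d.snd

variable {H t}

lemma pp_zero (d : H.Dart) : pp H t d 0 = Sum.inl d.fst := by simp [pp]

lemma pp_low {j : ℕ} (d : H.Dart) (h1 : 1 ≤ j) (h2 : j ≤ t) (hf : j - 1 < t) :
    pp H t d j = Sum.inr (d, ⟨j - 1, hf⟩) := by
  unfold pp; rw [dif_neg (by omega), dif_pos h2]

lemma pp_high {j : ℕ} (d : H.Dart) (h1 : t < j) (h2 : j ≤ 2 * t) (hf : 2 * t - j < t) :
    pp H t d j = Sum.inr (d.symm, ⟨2 * t - j, hf⟩) := by
  unfold pp; rw [dif_neg (by omega), dif_neg (by omega), dif_pos h2]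

lemma pp_top {j : ℕ} (d : H.Dart) (h1 : 2 * t < j) : pp H t d j = Sum.inl d.snd := by
  unfold pp; rw [dif_neg (by omega), dif_neg (by omega), dif_neg (by omega)]

lemma pp_symm (d : H.Dart) {k : ℕ} (hk : k ≤ 2 * t + 1) :
    pp H t d.symm k = pp H t d (2 * t + 1 - k) := by
  by_cases h0 : k = 0
  · subst h0; rw [pp_zero, pp_top d (by omega)]; rfl
  · by_cases h1 : k ≤ t
    · rw [pp_low d.symm (by omega) h1 (by omega),
        pp_high d (by omega) (by omega) (by omega)]
      simp only [Sum.inr.injEq, Prod.mk.injEq, Fin.mk.injEq]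
      exact ⟨trivial, by omega⟩
    · by_cases h2 : k ≤ 2 * t
      · rw [pp_high d.symm (by omega) h2 (by omega),
          pp_low d (by omega) (by omega) (by omega), SimpleGraph.Dart.symm_symm]
        simp only [Sum.inr.injEq, Prod.mk.injEq, Fin.mk.injEq]
        exact ⟨trivial, by omega⟩
      · rw [pp_top d.symm (by omega), show 2 * t + 1 - k = 0 by omega, pp_zero]; rfl


lemma pp_of_fin (ht : 0 < t) (d : H.Dart) (i : Fin t) :
    pp H t d (i.val + 1) = Sum.inr (d, i) := by
  rw [pp_low d (by omega) (by omega : i.val + 1 ≤ t) (by omega)]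
  have : i.val + 1 - 1 = i.val := by omega
  congr 1

lemma adj_pp (ht : 0 < t) (d : H.Dart) {j : ℕ} (hj : j ≤ 2 * t) :
    (Subdiv H t).Adj (pp H t d j) (pp H t d (j + 1)) := by
  rw [Subdiv, SimpleGraph.fromRel_adj]
  by_cases h0 : j = 0
  · subst h0
    rw [pp_zero, pp_low d (by omega) ht (by omega)]
    exact ⟨by simp, Or.inl ⟨rfl, rfl⟩⟩
  · by_cases h1 : j + 1 ≤ t
    · rw [pp_low d (by omega) (by omega) (by omega), pp_low d (by omega) h1 (by omega)]
      refine ⟨?_, Or.inl (Or.inl ⟨rfl, by simp only [Fin.val_mk] <;> omega⟩)⟩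
      rintro hh
      simp only [Sum.inr.injEq, Prod.mk.injEq, Fin.mk.injEq] at hh
      omega
    · by_cases h2 : j = t
      · subst h2
        rw [pp_low d (by omega) le_rfl (by omega), pp_high d (by omega) (by omega) (by omega)]
        refine ⟨?_, Or.inl (Or.inr ⟨rfl, by simp only [Fin.val_mk] <;> omega, by simp only [Fin.val_mk] <;> omega⟩)⟩
        rintro hh
        simp only [Sum.inr.injEq, Prod.mk.injEq, Fin.mk.injEq] at hh
        exact SimpleGraph.Dart.symm_ne d hh.1.symm
      · by_cases h3 : j + 1 ≤ 2 * t
        · rw [pp_high d (by omega) (by omega) (by omega), pp_high d (by omega) h3 (by omega)]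
          refine ⟨?_, Or.inr (Or.inl ⟨rfl, by simp only [Fin.val_mk] <;> omega⟩)⟩
          rintro hh
          simp only [Sum.inr.injEq, Prod.mk.injEq, Fin.mk.injEq] at hh
          omega
        · have hj2 : j = 2 * t := by omega
          subst hj2
          rw [pp_high d (by omega) le_rfl (by omega), pp_top d (by omega)]
          exact ⟨by simp, Or.inr ⟨rfl, by simp only [Fin.val_mk] <;> omega⟩⟩

lemma adj_cases (ht : 0 < t) {a b : V ⊕ (H.Dart × Fin t)} (h : (Subdiv H t).Adj a b) :
    ∃ d : H.Dart, ∃ j : ℕ, j ≤ 2 * t ∧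
      ((a = pp H t d j ∧ b = pp H t d (j + 1)) ∨ (b = pp H t d j ∧ a = pp H t d (j + 1))) := by
  rw [Subdiv, SimpleGraph.fromRel_adj] at h
  obtain ⟨-, h⟩ := h
  rcases a with u | ⟨d, i⟩ <;> rcases b with v | ⟨e, jf⟩
  · exact absurd h (by simp)
  · obtain ⟨rfl, h2⟩ | h := h
    · refine ⟨e, 0, by omega, Or.inl ⟨(pp_zero e).symm, ?_⟩⟩
      rw [show (0:ℕ) + 1 = jf.val + 1 by omega, pp_of_fin ht]
    · exact h.elim
  · obtain h | ⟨rfl, h2⟩ := h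
    · exact h.elim
    · refine ⟨d, 0, by omega, Or.inr ⟨(pp_zero d).symm, ?_⟩⟩
      rw [show (0:ℕ) + 1 = i.val + 1 by omega, pp_of_fin ht]
  · obtain (⟨rfl, h2⟩ | ⟨rfl, h2, h3⟩) | (⟨rfl, h2⟩ | ⟨rfl, h2, h3⟩) := h
    · refine ⟨d, i.val + 1, by omega, Or.inl ⟨(pp_of_fin ht d i).symm, ?_⟩⟩
      rw [show i.val + 1 + 1 = jf.val + 1 by omega, pp_of_fin ht]
    · refine ⟨d, t, by omega, Or.inl ⟨?_, ?_⟩⟩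
      · rw [pp_low d (by omega) le_rfl (by omega)]
        exact congrArg _ (Prod.ext rfl (Fin.ext (by simp; omega)))
      · rw [pp_high d (by omega) (by omega) (by omega)]
        exact congrArg _ (Prod.ext rfl (Fin.ext (by simp; omega)))
    · refine ⟨e, jf.val + 1, by omega, Or.inr ⟨(pp_of_fin ht e jf).symm, ?_⟩⟩
      rw [show jf.val + 1 + 1 = i.val + 1 by omega, pp_of_fin ht]
    · refine ⟨e, t, by omega, Or.inr ⟨?_, ?_⟩⟩
      · rw [pp_low e (by omega) le_rfl (by omega)]
        exact congrArg _ (Prod.ext rfl (Fin.ext (by simp; omega)))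
      · rw [pp_high e (by omega) (by omega) (by omega)]
        exact congrArg _ (Prod.ext rfl (Fin.ext (by simp; omega)))

end SubdivAux
lemma countA (m : ℕ) (Q : ℕ → Prop) [DecidablePred Q]
    [DecidablePred (fun j => Q j ∧ Q (j + 1))] [Decidable (∀ j ≤ m + 1, Q j)] :
    ((Finset.range (m+1)).filter (fun j => Q j ∧ Q (j+1))).card ≤
      ((Finset.Icc 1 m).filter Q).card + (if ∀ j ≤ m+1, Q j then 1 else 0) := by
  by_cases hfull : ∀ j ≤ m+1, Q j
  · rw [if_pos hfull]
    have h2 : (Finset.Icc 1 m).filter Q = Finset.Icc 1 m :=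
      Finset.filter_true_of_mem (fun j hj => hfull j (by rw [Finset.mem_Icc] at hj; omega))
    calc ((Finset.range (m+1)).filter (fun j => Q j ∧ Q (j+1))).card
        ≤ (Finset.range (m+1)).card := Finset.card_filter_le _ _
      _ = m + 1 := Finset.card_range _
      _ ≤ _ := by rw [h2, Nat.card_Icc]; omega
  · rw [if_neg hfull]
    push_neg at hfull
    obtain ⟨g, hg, hQg⟩ := hfull
    have := Finset.card_le_card_of_injOn (fun j => if j < g then j + 1 else j)
      (s := (Finset.range (m+1)).filter (fun j => Q j ∧ Q (j+1)))
      (t := (Finset.Icc 1 m).filter Q) ?_ ?_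
    · omega
    · intro j hj
      rw [Finset.mem_coe, Finset.mem_filter, Finset.mem_range] at hj
      obtain ⟨hjm, hQj, hQj1⟩ := hj
      have hj_ne : j ≠ g := fun h => hQg (h ▸ hQj)
      have hj1_ne : j + 1 ≠ g := fun h => hQg (h ▸ hQj1)
      rw [Finset.mem_coe, Finset.mem_filter, Finset.mem_Icc]
      simp only
      split_ifs with h
      · exact ⟨⟨by omega, by omega⟩, hQj1⟩
      · exact ⟨⟨by omega, by omega⟩, hQj⟩
    · intro j1 h1 j2 h2 heq
      simp only [Finset.coe_filter, Set.mem_setOf_eq, Finset.mem_range] at h1 h2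
      have hne1 : j1 ≠ g := fun h => hQg (h ▸ h1.2.1)
      have hne2 : j2 ≠ g := fun h => hQg (h ▸ h2.2.1)
      simp only at heq
      split_ifs at heq <;> omega

open SubdivAux Finset in
/-- The `2t`-subdivision of a 3-regular graph on `2n` vertices is balanced: every
induced subgraph has average degree at most `2 + 1/(3t+1)`. -/
theorem subdiv_balanced {V : Type*} [Fintype V] [DecidableEq V]
    (H : SimpleGraph V) [DecidableRel H.Adj] (n t : ℕ) (hn : 0 < n) (ht : 0 < t)
    (hcard : Fintype.card V = 2 * n) (hreg : H.IsRegularOfDegree 3) :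
    ∀ S : Finset (V ⊕ (H.Dart × Fin t)),
      2 * (((Subdiv H t).edgeFinset.filter (fun e => ∀ v ∈ e, v ∈ S)).card : ℚ)
        ≤ (2 + 1 / (3 * t + 1)) * S.card := by
  intro S
  set E : Finset (Sym2 (V ⊕ (H.Dart × Fin t))) :=
    (Subdiv H t).edgeFinset.filter (fun e => ∀ v ∈ e, v ∈ S) with hE
  set pairs : Finset (H.Dart × ℕ) :=
    (Finset.univ ×ˢ Finset.range (2 * t + 1)).filter
      (fun x => pp H t x.1 x.2 ∈ S ∧ pp H t x.1 (x.2 + 1) ∈ S) with hpairs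
  set ψ : H.Dart × ℕ → Sym2 (V ⊕ (H.Dart × Fin t)) :=
    fun x => s(pp H t x.1 x.2, pp H t x.1 (x.2 + 1)) with hψ
  set Fd : Finset H.Dart :=
    Finset.univ.filter (fun d => ∀ j ≤ 2 * t + 1, pp H t d j ∈ S) with hFd
  set B : Finset (V ⊕ (H.Dart × Fin t)) := S.filter (fun x => x.isRight) with hB
  set AV : Finset V := Finset.univ.filter (fun u => (Sum.inl u : V ⊕ (H.Dart × Fin t)) ∈ S)
    with hAV
  -- every good pair gives an edge of the induced subgraph
  have hψmem : ∀ x ∈ pairs, ψ x ∈ E := by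
    rintro ⟨d, j⟩ hx
    rw [hpairs, Finset.mem_filter, Finset.mem_product, Finset.mem_range] at hx
    obtain ⟨⟨-, hj⟩, h1, h2⟩ := hx
    rw [hE, Finset.mem_filter, SimpleGraph.mem_edgeFinset, SimpleGraph.mem_edgeSet]
    refine ⟨adj_pp ht d (by omega), ?_⟩
    intro v hv
    rw [hψ, Sym2.mem_iff] at hv
    rcases hv with rfl | rfl
    · exact h1
    · exact h2
  -- each induced edge has at least two preimage pairs
  have hfib : ∀ e ∈ E, 2 ≤ (pairs.filter (fun x => ψ x = e)).card := by
    intro e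
    induction e using Sym2.ind with
    | _ a b =>
      intro he
      rw [hE, Finset.mem_filter, SimpleGraph.mem_edgeFinset, SimpleGraph.mem_edgeSet] at he
      obtain ⟨hadj, hS⟩ := he
      obtain ⟨d, j, hj, hcase⟩ := adj_cases ht hadj
      have haS : a ∈ S := hS a (Sym2.mem_mk_left a b)
      have hbS : b ∈ S := hS b (Sym2.mem_mk_right a b)
      have hpj : pp H t d j ∈ S ∧ pp H t d (j + 1) ∈ S := by
        rcases hcase with ⟨h1, h2⟩ | ⟨h1, h2⟩
        · exact ⟨h1 ▸ haS, h2 ▸ hbS⟩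
        · exact ⟨h1 ▸ hbS, h2 ▸ haS⟩
      have heq : ψ (d, j) = s(a, b) := by
        show s(pp H t d j, pp H t d (j + 1)) = s(a, b)
        rcases hcase with ⟨h1, h2⟩ | ⟨h1, h2⟩
        · rw [← h1, ← h2]
        · rw [← h1, ← h2]; exact Sym2.eq_swap
      have hsym1 : pp H t d.symm (2 * t - j) = pp H t d (j + 1) := by
        rw [pp_symm d (by omega)]; congr 1; omega
      have hsym2 : pp H t d.symm (2 * t - j + 1) = pp H t d j := by
        rw [pp_symm d (by omega)]; congr 1; omega
      have heq2 : ψ (d.symm, 2 * t - j) = s(a, b) := by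
        rw [hψ]; dsimp only
        rw [hsym1, hsym2]
        exact Sym2.eq_swap.trans heq
      have hmem1 : (d, j) ∈ pairs.filter (fun x => ψ x = s(a, b)) := by
        rw [Finset.mem_filter, hpairs, Finset.mem_filter, Finset.mem_product, Finset.mem_range]
        exact ⟨⟨⟨Finset.mem_univ _, by omega⟩, hpj⟩, heq⟩
      have hmem2 : (d.symm, 2 * t - j) ∈ pairs.filter (fun x => ψ x = s(a, b)) := by
        rw [Finset.mem_filter, hpairs, Finset.mem_filter, Finset.mem_product, Finset.mem_range]
        refine ⟨⟨⟨Finset.mem_univ _, by omega⟩, ?_, ?_⟩, heq2⟩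
        · rw [hsym1]; exact hpj.2
        · rw [hsym2]; exact hpj.1
      have hne : (d, j) ≠ (d.symm, 2 * t - j) := by
        intro hcontra
        exact SimpleGraph.Dart.symm_ne d (congrArg Prod.fst hcontra).symm
      calc 2 = ({(d, j), (d.symm, 2 * t - j)} : Finset (H.Dart × ℕ)).card :=
            (Finset.card_pair hne).symm
        _ ≤ _ := Finset.card_le_card
            (Finset.insert_subset_iff.mpr ⟨hmem1, Finset.singleton_subset_iff.mpr hmem2⟩)
  have hE2 : 2 * E.card ≤ pairs.card := by
    rw [Finset.card_eq_sum_card_fiberwise hψmem]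
    calc 2 * E.card = ∑ _e ∈ E, 2 := by rw [Finset.sum_const, smul_eq_mul, mul_comm]
      _ ≤ _ := Finset.sum_le_sum hfib
  -- fiberwise decomposition over darts
  have hsum1 : pairs.card
      = ∑ d : H.Dart, ((Finset.range (2 * t + 1)).filter
          (fun j => pp H t d j ∈ S ∧ pp H t d (j + 1) ∈ S)).card := by
    rw [hpairs, Finset.card_filter, Finset.sum_product]
    refine Finset.sum_congr rfl (fun d _ => ?_)
    rw [Finset.card_filter]
  have hsumfull : ∑ d : H.Dart, (if ∀ j ≤ 2 * t + 1, pp H t d j ∈ S then 1 else 0)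
      = Fd.card := by
    rw [hFd, Finset.card_filter]
  set pairsB : Finset (H.Dart × ℕ) :=
    (Finset.univ ×ˢ Finset.Icc 1 (2 * t)).filter (fun x => pp H t x.1 x.2 ∈ S) with hpairsB
  have hsumB : ∑ d : H.Dart, ((Finset.Icc 1 (2 * t)).filter (fun j => pp H t d j ∈ S)).card
      = pairsB.card := by
    rw [hpairsB, Finset.card_filter, Finset.sum_product]
    exact Finset.sum_congr rfl (fun d _ => (Finset.card_filter _ _))
  have hpairsle : pairs.card ≤ pairsB.card + Fd.card := by
    rw [hsum1, ← hsumB, ← hsumfull, ← Finset.sum_add_distrib]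
    exact Finset.sum_le_sum (fun d _ => countA (2 * t) (fun j => pp H t d j ∈ S))
  -- internal vertices bound
  have hBbound : pairsB.card ≤ 2 * B.card := by
    have hmaps : ∀ x ∈ pairsB,
        (pp H t x.1 x.2, decide (x.2 ≤ t)) ∈ B ×ˢ (Finset.univ : Finset Bool) := by
      rintro ⟨d, j⟩ hx
      rw [hpairsB, Finset.mem_filter, Finset.mem_product, Finset.mem_Icc] at hx
      obtain ⟨⟨-, hj1, hj2⟩, hmem⟩ := hx
      rw [Finset.mem_product]
      refine ⟨Finset.mem_filter.mpr ⟨hmem, ?_⟩, Finset.mem_univ _⟩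
      by_cases hjt : j ≤ t
      · rw [pp_low d hj1 hjt (by omega)]; rfl
      · rw [pp_high d (by omega) hj2 (by omega)]; rfl
    have hinj : Set.InjOn (fun x : H.Dart × ℕ => (pp H t x.1 x.2, decide (x.2 ≤ t)))
        ↑pairsB := by
      rintro ⟨d1, j1⟩ h1 ⟨d2, j2⟩ h2 heq
      simp only [Finset.coe_filter, Set.mem_setOf_eq, Finset.mem_product, Finset.mem_Icc,
        hpairsB] at h1 h2
      obtain ⟨⟨-, hj1, hj2⟩, -⟩ := h1
      obtain ⟨⟨-, hk1, hk2⟩, -⟩ := h2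
      simp only [Prod.mk.injEq] at heq
      obtain ⟨hpp, hbool⟩ := heq
      rw [decide_eq_decide] at hbool
      by_cases hjt : j1 ≤ t
      · have hkt : j2 ≤ t := hbool.mp hjt
        rw [pp_low d1 hj1 hjt (by omega), pp_low d2 hk1 hkt (by omega)] at hpp
        simp only [Sum.inr.injEq, Prod.mk.injEq, Fin.mk.injEq] at hpp
        obtain ⟨rfl, h⟩ := hpp
        exact Prod.ext rfl (by omega)
      · have hkt : ¬ j2 ≤ t := fun h => hjt (hbool.mpr h)
        rw [pp_high d1 (by omega) hj2 (by omega), pp_high d2 (by omega) hk2 (by omega)] at hpp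
        simp only [Sum.inr.injEq, Prod.mk.injEq, Fin.mk.injEq] at hpp
        obtain ⟨hd, h⟩ := hpp
        have : d1 = d2 := SimpleGraph.Dart.symm_involutive.injective hd
        subst this
        exact Prod.ext rfl (by omega)
    calc pairsB.card ≤ (B ×ˢ (Finset.univ : Finset Bool)).card :=
          Finset.card_le_card_of_injOn _ hmaps hinj
      _ = 2 * B.card := by
          rw [Finset.card_product, Finset.card_univ, Fintype.card_bool, mul_comm]
  -- each full path contributes t internal vertices (per dart)
  have htF : t * Fd.card ≤ B.card := by
    have hmaps : ∀ x ∈ Fd ×ˢ (Finset.univ : Finset (Fin t)),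
        (Sum.inr (x.1, x.2) : V ⊕ (H.Dart × Fin t)) ∈ B := by
      rintro ⟨d, i⟩ hx
      rw [Finset.mem_product, hFd, Finset.mem_filter] at hx
      obtain ⟨⟨-, hfull⟩, -⟩ := hx
      have h1 : pp H t d (i.val + 1) ∈ S := hfull _ (by omega)
      rw [pp_of_fin ht] at h1
      exact Finset.mem_filter.mpr ⟨h1, rfl⟩
    have hinj : Set.InjOn (fun x : H.Dart × Fin t => (Sum.inr (x.1, x.2) : V ⊕ (H.Dart × Fin t)))
        ↑(Fd ×ˢ (Finset.univ : Finset (Fin t))) := by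
      rintro ⟨d1, i1⟩ - ⟨d2, i2⟩ - heq
      simpa using heq
    calc t * Fd.card = (Fd ×ˢ (Finset.univ : Finset (Fin t))).card := by
          rw [Finset.card_product, Finset.card_univ, Fintype.card_fin, mul_comm]
      _ ≤ B.card := Finset.card_le_card_of_injOn _ hmaps hinj
  -- each full dart starts at a vertex of S; each vertex has only 3 darts
  have hF3 : Fd.card ≤ 3 * AV.card := by
    have hmapsto : ∀ d ∈ Fd, d.fst ∈ AV := by
      intro d hd
      rw [hFd, Finset.mem_filter] at hd
      have h0 : pp H t d 0 ∈ S := hd.2 0 (by omega)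
      rw [pp_zero] at h0
      exact Finset.mem_filter.mpr ⟨Finset.mem_univ _, h0⟩
    rw [Finset.card_eq_sum_card_fiberwise hmapsto]
    calc ∑ u ∈ AV, (Fd.filter (fun d => d.fst = u)).card
        ≤ ∑ _u ∈ AV, 3 := by
          refine Finset.sum_le_sum (fun u _ => ?_)
          have hsub : Fd.filter (fun d => d.fst = u)
              ⊆ Finset.univ.filter (fun d : H.Dart => d.fst = u) := by
            intro d hd
            rw [Finset.mem_filter] at hd ⊢
            exact ⟨Finset.mem_univ _, hd.2⟩
          calc (Fd.filter (fun d => d.fst = u)).card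
              ≤ (Finset.univ.filter (fun d : H.Dart => d.fst = u)).card :=
                Finset.card_le_card hsub
            _ = H.degree u := H.dart_fst_fiber_card_eq_degree u
            _ = 3 := hreg u
      _ = 3 * AV.card := by rw [Finset.sum_const, smul_eq_mul, mul_comm]
  -- vertex count
  have hAB : AV.card + B.card ≤ S.card := by
    have h1 : AV.card = (S.filter (fun x => x.isLeft)).card := by
      refine Finset.card_bij (fun u _ => Sum.inl u) ?_ ?_ ?_
      · intro u hu
        rw [hAV, Finset.mem_filter] at hu
        exact Finset.mem_filter.mpr ⟨hu.2, rfl⟩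
      · intro u₁ hu₁ u₂ hu₂ h
        exact Sum.inl_injective h
      · intro x hx
        rw [Finset.mem_filter] at hx
        rcases x with u | p
        · exact ⟨u, Finset.mem_filter.mpr ⟨Finset.mem_univ _, hx.1⟩, rfl⟩
        · simp at hx
    have h2 : (S.filter (fun x => x.isLeft)).card + (S.filter (fun x => ¬ x.isLeft)).card
        = S.card := Finset.card_filter_add_card_filter_not _
    have h3 : B ⊆ S.filter (fun x => ¬ x.isLeft) := by
      intro x hx
      rw [hB, Finset.mem_filter] at hx
      refine Finset.mem_filter.mpr ⟨hx.1, ?_⟩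
      rcases x with u | p
      · simp at hx
      · simp
    have h4 := Finset.card_le_card h3
    omega
  -- assemble, in ℕ
  have k1 : 2 * E.card ≤ 2 * B.card + Fd.card := by omega
  have k2 : (3 * t + 1) * (2 * E.card) ≤ (3 * t + 1) * (2 * B.card + Fd.card) :=
    Nat.mul_le_mul_left _ k1
  have k3 : (2 * t + 1) * Fd.card ≤ (2 * t + 1) * (3 * AV.card) :=
    Nat.mul_le_mul_left _ hF3
  have k4 : (6 * t + 3) * (AV.card + B.card) ≤ (6 * t + 3) * S.card :=
    Nat.mul_le_mul_left _ hAB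
  have key : (3 * t + 1) * (2 * E.card) ≤ (6 * t + 3) * S.card := by nlinarith [k2, k3, k4, htF]
  -- pass to ℚ
  have hq : ((3 * t + 1 : ℕ) : ℚ) * ((2 * E.card : ℕ) : ℚ) ≤ ((6 * t + 3 : ℕ) : ℚ) * S.card := by
    rw [← Nat.cast_mul]
    calc (((3 * t + 1) * (2 * E.card) : ℕ) : ℚ) ≤ (((6 * t + 3) * S.card : ℕ) : ℚ) := by
          exact_mod_cast key
      _ = _ := by push_cast; ring
  push_cast at hq
  have hpos : (0 : ℚ) < 3 * (t : ℚ) + 1 := by positivity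
  rw [show (2 + 1 / (3 * (t : ℚ) + 1)) = (6 * (t : ℚ) + 3) / (3 * (t : ℚ) + 1) by
    field_simp; ring]
  rw [div_mul_eq_mul_div, le_div_iff₀ hpos]
  nlinarith [hq]
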